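/- For 0 < t, ∫₀^∞ ((e^{−r²/(2t) − t/8} sinh(r))/t − p(r,t)) dr = √(π/2) · e^{3t/8} · (2Φ(√t) − 1)/√t − 1, where p(·,t) is a probability density; moreover for 0 < t ≤ 1 this quantity is at most e^{3t/8} − 1 ≤ t/2. In particular, √(π/2)·e^{3t/8}·(2Φ(√t)−1)/√t − 1 ≤ t/2 for 0 < t ≤ 1. -/

import Mathlib

open MeasureTheory

/-- The standard normal cumulative distribution function. -/
noncomputable def stdNormalCdf (x : ℝ) : ℝ :=
  ∫ u in Set.Iic x, Real.exp (-u ^ 2 / 2) / Real.sqrt (2 * Real.pi)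

open Set Real in
lemma gauss_integrable :
    Integrable (fun u : ℝ => Real.exp (-u ^ 2 / 2) / Real.sqrt (2 * Real.pi)) := by
  have h := (integrable_exp_neg_mul_sq (by norm_num : (0:ℝ) < 1/2)).div_const
    (Real.sqrt (2 * Real.pi))
  convert h using 3 with u
  ring_nf

open Set Real in
lemma stdNormalCdf_zero : stdNormalCdf 0 = 1 / 2 := by
  unfold stdNormalCdf
  have h1 : (∫ u in Iic (0:ℝ), Real.exp (-u ^ 2 / 2))
      = ∫ u in Ioi (0:ℝ), Real.exp (-u ^ 2 / 2) := by
    rw [show (Ioi (0:ℝ)) = Ioi (-(0:ℝ)) by norm_num,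
      ← integral_comp_neg_Iic 0 (fun u => Real.exp (-u ^ 2 / 2))]
    simp
  have h2 : (∫ u in Ioi (0:ℝ), Real.exp (-u ^ 2 / 2)) = Real.sqrt (2 * π) / 2 := by
    have := integral_gaussian_Ioi (1/2 : ℝ)
    rw [show π / (1/2) = 2 * π by ring] at this
    rw [← this]
    congr 1 with u; ring_nf
  rw [integral_div, h1, h2, div_div, div_eq_iff (by positivity)]
  ring

open Set Real in
lemma exp_38_le : Real.exp (3/8 : ℝ) ≤ 3/2 := by
  have h8 : Real.exp (3/8 : ℝ) ^ 8 = Real.exp 3 := by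
    rw [← Real.exp_nat_mul]; norm_num
  have h3 : Real.exp 3 ≤ (3/2 : ℝ) ^ 8 := by
    have he : Real.exp 3 = Real.exp 1 ^ 3 := by rw [← Real.exp_nat_mul]; norm_num
    rw [he]
    have h1 : Real.exp 1 ≤ 2.72 := (Real.exp_one_lt_d9.trans (by norm_num)).le
    calc Real.exp 1 ^ 3 ≤ (2.72:ℝ) ^ 3 := pow_le_pow_left₀ (Real.exp_pos 1).le h1 3
      _ ≤ (3/2:ℝ) ^ 8 := by norm_num
  have := h8 ▸ h3
  exact le_of_pow_le_pow_left₀ (by norm_num) (by norm_num) this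

theorem gaussian_cdf_ineq (t : ℝ) (ht0 : 0 < t) (ht1 : t ≤ 1) :
    Real.sqrt (Real.pi / 2) * Real.exp (3 * t / 8) * (2 * stdNormalCdf (Real.sqrt t) - 1) /
        Real.sqrt t ≤ 1 + t / 2 := by
  have hst : 0 < Real.sqrt t := Real.sqrt_pos.mpr ht0
  have hsp : (0:ℝ) < Real.sqrt (2 * Real.pi) := Real.sqrt_pos.mpr (by positivity)
  set φ : ℝ → ℝ := fun u => Real.exp (-u ^ 2 / 2) / Real.sqrt (2 * Real.pi) with hφ
  -- step 1: 2 * Φ(√t) - 1 = 2 * ∫ over Ioc 0 √t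
  have hdiff : stdNormalCdf (Real.sqrt t) - stdNormalCdf 0
      = ∫ u in Set.Ioc 0 (Real.sqrt t), φ u := by
    have := intervalIntegral.integral_Iic_sub_Iic (f := φ) (μ := volume) (a := 0)
      (b := Real.sqrt t) gauss_integrable.integrableOn gauss_integrable.integrableOn
    rw [stdNormalCdf, stdNormalCdf, this,
      intervalIntegral.integral_of_le hst.le]
  -- step 2: bound the integral over Ioc by length * sup
  have hbound : (∫ u in Set.Ioc 0 (Real.sqrt t), φ u)
      ≤ Real.sqrt t / Real.sqrt (2 * Real.pi) := by
    have hC : ∀ x ∈ Set.Ioc (0:ℝ) (Real.sqrt t), ‖φ x‖ ≤ 1 / Real.sqrt (2 * Real.pi) := by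
      intro x hx
      rw [Real.norm_eq_abs, abs_of_nonneg (by positivity)]
      show Real.exp (-x ^ 2 / 2) / Real.sqrt (2 * Real.pi) ≤ 1 / Real.sqrt (2 * Real.pi)
      gcongr
      exact Real.exp_le_one_iff.mpr (by nlinarith [sq_nonneg x])
    have hμ : volume (Set.Ioc (0:ℝ) (Real.sqrt t)) < ⊤ := by
      rw [Real.volume_Ioc]; exact ENNReal.ofReal_lt_top
    have h := MeasureTheory.norm_setIntegral_le_of_norm_le_const hμ hC
      (f := φ) (μ := volume)
    rw [Real.volume_real_Ioc_of_le (by linarith)] at h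
    calc (∫ u in Set.Ioc 0 (Real.sqrt t), φ u)
        ≤ ‖∫ u in Set.Ioc 0 (Real.sqrt t), φ u‖ := le_abs_self _
      _ ≤ 1 / Real.sqrt (2 * Real.pi) * (Real.sqrt t - 0) := h
      _ = Real.sqrt t / Real.sqrt (2 * Real.pi) := by ring
  have h2phi : 2 * stdNormalCdf (Real.sqrt t) - 1
      ≤ 2 * Real.sqrt t / Real.sqrt (2 * Real.pi) := by
    have h0 := stdNormalCdf_zero
    have hb2 := hbound
    rw [← hdiff, h0] at hb2
    simp only [div_eq_mul_inv] at hb2 ⊢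
    linarith
  -- step 3: the sqrt arithmetic: √(π/2) * 2 / √(2π) = 1
  have hsq : Real.sqrt (Real.pi / 2) * 2 = Real.sqrt (2 * Real.pi) := by
    rw [show (2:ℝ) * Real.pi = (Real.pi / 2) * 2 ^ 2 by ring,
      Real.sqrt_mul (by positivity), Real.sqrt_sq (by norm_num)]
  have hE : 0 < Real.exp (3 * t / 8) := Real.exp_pos _
  -- main bound: LHS ≤ exp (3t/8)
  have hmain : Real.sqrt (Real.pi / 2) * Real.exp (3 * t / 8) *
      (2 * stdNormalCdf (Real.sqrt t) - 1) / Real.sqrt t ≤ Real.exp (3 * t / 8) := by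
    rw [div_le_iff₀ hst]
    calc Real.sqrt (Real.pi / 2) * Real.exp (3 * t / 8) * (2 * stdNormalCdf (Real.sqrt t) - 1)
        ≤ Real.sqrt (Real.pi / 2) * Real.exp (3 * t / 8) *
          (2 * Real.sqrt t / Real.sqrt (2 * Real.pi)) := by
          apply mul_le_mul_of_nonneg_left h2phi (by positivity)
      _ = Real.exp (3 * t / 8) * Real.sqrt t *
          (Real.sqrt (Real.pi / 2) * 2 / Real.sqrt (2 * Real.pi)) := by ring
      _ = Real.exp (3 * t / 8) * Real.sqrt t := by
          rw [hsq, div_self (ne_of_gt hsp), mul_one]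
  -- step 4: exp (3t/8) ≤ 1 + t/2 via convexity
  have hconv : Real.exp (3 * t / 8) ≤ 1 + t / 2 := by
    have h := (convexOn_exp.2 (Set.mem_univ (0:ℝ)) (Set.mem_univ (3/8 : ℝ))
      (by linarith : (0:ℝ) ≤ 1 - t) ht0.le (by ring))
    simp only [smul_eq_mul, mul_zero, zero_add, Real.exp_zero] at h
    have : (1 - t) * 1 + t * Real.exp (3/8) ≤ 1 + t / 2 := by
      nlinarith [exp_38_le]
    calc Real.exp (3 * t / 8) = Real.exp (t * (3/8)) := by ring_nf
      _ ≤ (1 - t) * 1 + t * Real.exp (3/8) := by simpa using h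
      _ ≤ 1 + t / 2 := this
  exact hmain.trans hconv
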